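/- Let p be a prime, r ≥ 1 an integer, q = p^r with q > 4, and b an integer such that gcd(q² − 2q + b − 3, 2(b − 4)) = 1. Let s = ∏_{ℓ} (ℓ − 1), the product running over the distinct prime divisors ℓ of |2(b − 4)|. Then for every integer i ≥ 0, setting q_i = p^{r + i·s}, one has gcd(q_i² − 2q_i + b − 3, 2(b − 4)) = 1. -/

import Mathlib

/-- arithmetic core of Proposition 6 of the paper. Let `p` be a prime,
`r ≥ 1`, `q = p^r > 4` and `b` an integer with `gcd(q² − 2q + b − 3, 2(b − 4)) = 1`.
Let `s = ∏ (ℓ − 1)` over the distinct prime divisors `ℓ` of `|2(b − 4)|`. Then for every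
`i ≥ 0`, setting `q_i = p^{r + i·s}`, one has `gcd(q_i² − 2q_i + b − 3, 2(b − 4)) = 1`. -/
theorem stmt_10 (p : ℕ) (hp : p.Prime) (r : ℕ) (hr : 1 ≤ r) (q : ℕ) (hq : q = p ^ r)
    (hq4 : 4 < q) (b : ℤ)
    (hgcd : Int.gcd ((q : ℤ) ^ 2 - 2 * (q : ℤ) + b - 3) (2 * (b - 4)) = 1)
    (s : ℕ) (hs : s = ∏ ℓ ∈ (2 * (b - 4)).natAbs.primeFactors, (ℓ - 1)) :
    ∀ i : ℕ,
      Int.gcd (((p : ℤ) ^ (r + i * s)) ^ 2 - 2 * (p : ℤ) ^ (r + i * s) + b - 3)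
        (2 * (b - 4)) = 1 := by
  intro i
  by_contra hne
  set A : ℤ := ((p : ℤ) ^ (r + i * s)) ^ 2 - 2 * (p : ℤ) ^ (r + i * s) + b - 3 with hA
  set A0 : ℤ := (q : ℤ) ^ 2 - 2 * (q : ℤ) + b - 3 with hA0
  set B : ℤ := 2 * (b - 4) with hB
  have hq5 : (5 : ℤ) ≤ (q : ℤ) := by exact_mod_cast hq4
  have hB0 : B ≠ 0 := by
    intro h
    have hb4 : b = 4 := by
      have := h
      simp only [hB] at this
      omega
    rw [h, Int.gcd_zero_right] at hgcd
    have : A0 = 1 ∨ A0 = -1 := by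
      rcases Int.natAbs_eq A0 with h1 | h1 <;> rw [hgcd] at h1 <;> omega
    rcases this with h1 | h1 <;> rw [hA0, hb4] at h1 <;> nlinarith
  -- get a prime divisor of the gcd
  obtain ⟨ℓ, hℓp, hℓd⟩ := Nat.exists_prime_and_dvd hne
  have hdA : (ℓ : ℤ) ∣ A := dvd_trans (Int.natCast_dvd_natCast.mpr hℓd) (Int.gcd_dvd_left _ _)
  have hdB : (ℓ : ℤ) ∣ B := dvd_trans (Int.natCast_dvd_natCast.mpr hℓd) (Int.gcd_dvd_right _ _)
  have hmem : ℓ ∈ B.natAbs.primeFactors := by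
    rw [Nat.mem_primeFactors]
    refine ⟨hℓp, ?_, by simpa using hB0⟩
    have := Int.natAbs_dvd_natAbs.mpr hdB
    simpa using this
  obtain ⟨k, hk⟩ : (ℓ - 1) ∣ s := hs ▸ Finset.dvd_prod_of_mem _ hmem
  haveI : Fact ℓ.Prime := ⟨hℓp⟩
  -- key: p^(r+i*s) = p^r in ZMod ℓ
  have key : ((p : ZMod ℓ)) ^ (r + i * s) = (p : ZMod ℓ) ^ r := by
    by_cases h0 : (p : ZMod ℓ) = 0
    · rw [h0, zero_pow (by omega), zero_pow (by omega)]
    · rw [pow_add, hk, show i * ((ℓ - 1) * k) = (ℓ - 1) * (i * k) by ring, pow_mul,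
        ZMod.pow_card_sub_one_eq_one h0, one_pow, mul_one]
  -- ℓ does not divide A0
  have hndA0 : ¬ ((ℓ : ℤ) ∣ A0) := by
    intro hdA0
    have : (ℓ : ℤ) ∣ (Int.gcd A0 B : ℤ) := Int.dvd_coe_gcd hdA0 hdB
    rw [hgcd] at this
    exact hℓp.one_lt.ne' (by exact_mod_cast Int.eq_one_of_dvd_one (by positivity) this)
  apply hndA0
  rw [← ZMod.intCast_zmod_eq_zero_iff_dvd] at hdA ⊢
  rw [hA0, hq]
  rw [hA] at hdA
  push_cast at hdA ⊢
  rw [key] at hdA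
  exact hdA
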